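/- If there exists a nonzero Banach space Y such that every uniformly p-convergent subset of W(X,Y) is weakly equicompact, then every p-convergent operator from X to Y is compact, i.e., C_p(X,Y) = K(X,Y). -/

import Mathlib

open Filter Topology Metric Bornology ENNReal

noncomputable section

universe u v w

variable {X : Type*} {Y : Type*} {Z : Type*}

section Defs
variable [NormedAddCommGroup X] [NormedSpace ℝ X]
variable [NormedAddCommGroup Y] [NormedSpace ℝ Y]

/-- A sequence is weakly `p`-summable if `(x*(xₙ))ₙ ∈ ℓ_p` for every functional `x*`;
for `p = ∞` we use weakly null sequences. -/
def WeaklyPSummable (p : ℝ≥0∞) (x : ℕ → X) : Prop :=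
  if p = ⊤ then ∀ f : X →L[ℝ] ℝ, Tendsto (fun n => f (x n)) atTop (𝓝 0)
  else ∀ f : X →L[ℝ] ℝ, Memℓp (fun n => f (x n)) p

/-- A set of operators is uniformly `p`-convergent if every weakly `p`-summable
sequence converges to `0` uniformly on the set. -/
def UnifPConvergent (p : ℝ≥0∞) (K : Set (X →L[ℝ] Y)) : Prop :=
  ∀ x : ℕ → X, WeaklyPSummable p x →
    ∀ ε > (0 : ℝ), ∃ N : ℕ, ∀ n ≥ N, ∀ T ∈ K, ‖T (x n)‖ < ε

/-- A `p`-convergent operator maps weakly `p`-summable sequences to norm-null sequences. -/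
def PConvergentOp (p : ℝ≥0∞) (T : X →L[ℝ] Y) : Prop :=
  ∀ x : ℕ → X, WeaklyPSummable p x → Tendsto (fun n => ‖T (x n)‖) atTop (𝓝 0)

/-- A sequence is weakly `p`-Cauchy if all differences along pairs of increasing
index sequences are weakly `p`-summable. -/
def WeaklyPCauchy (p : ℝ≥0∞) (x : ℕ → X) : Prop :=
  ∀ m k : ℕ → ℕ, StrictMono m → StrictMono k →
    WeaklyPSummable p (fun n => x (m n) - x (k n))

/-- A set is weakly `p`-precompact if every sequence in it has a weakly `p`-Cauchy
subsequence. -/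
def WeaklyPPrecompact (p : ℝ≥0∞) (A : Set X) : Prop :=
  ∀ x : ℕ → X, (∀ n, x n ∈ A) →
    ∃ s : ℕ → ℕ, StrictMono s ∧ WeaklyPCauchy p (fun n => x (s n))

/-- `B` is `U`-bounded: bounded and with positive distance to the boundary of `U`. -/
def UBounded (U B : Set X) : Prop :=
  IsBounded B ∧ B ⊆ U ∧ ∃ d > (0 : ℝ), ∀ x ∈ B, ball x d ⊆ U

/-- A set of operators is equicompact if every bounded sequence has a subsequence on
which the operators converge in norm, uniformly on the set. -/
def Equicompact (M : Set (X →L[ℝ] Y)) : Prop :=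
  ∀ x : ℕ → X, IsBounded (Set.range x) →
    ∃ s : ℕ → ℕ, StrictMono s ∧ ∃ g : (X →L[ℝ] Y) → Y,
      TendstoUniformlyOn (fun n T => T (x (s n))) g atTop M

/-- A set of operators is weakly equicompact if every bounded sequence has a
subsequence on which the operators converge weakly, uniformly on the set. -/
def WeaklyEquicompact (M : Set (X →L[ℝ] Y)) : Prop :=
  ∀ x : ℕ → X, IsBounded (Set.range x) →
    ∃ s : ℕ → ℕ, StrictMono s ∧ ∀ φ : Y →L[ℝ] ℝ, ∃ c : (X →L[ℝ] Y) → ℝ,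
      TendstoUniformlyOn (fun n T => φ (T (x (s n)))) c atTop M

/-- A weakly compact operator: the image of every bounded sequence has a weakly
convergent subsequence. -/
def WeaklyCompactOp (T : X →L[ℝ] Y) : Prop :=
  ∀ x : ℕ → X, IsBounded (Set.range x) →
    ∃ s : ℕ → ℕ, StrictMono s ∧ ∃ y : Y,
      ∀ φ : Y →L[ℝ] ℝ, Tendsto (fun n => φ (T (x (s n)))) atTop (𝓝 (φ y))

/-- A space has the `p`-Schur property if weakly `p`-summable sequences are norm null. -/
def PSchur (p : ℝ≥0∞) (W : Type*) [NormedAddCommGroup W] [NormedSpace ℝ W] : Prop :=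
  ∀ x : ℕ → W, WeaklyPSummable p x → Tendsto (fun n => ‖x n‖) atTop (𝓝 0)

/-- A set is relatively weakly `p`-compact if every sequence in it has a subsequence
weakly `p`-convergent to a point of the space. -/
def RelWeaklyPCompact (p : ℝ≥0∞) (A : Set X) : Prop :=
  ∀ x : ℕ → X, (∀ n, x n ∈ A) →
    ∃ s : ℕ → ℕ, StrictMono s ∧ ∃ a : X, WeaklyPSummable p (fun n => x (s n) - a)

/-- `f` is weakly `p`-sequentially continuous on `U` if it maps `U`-bounded weakly
`p`-Cauchy sequences to norm convergent sequences. -/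
def WeaklyPSeqContinuous (p : ℝ≥0∞) (U : Set X) (f : X → Y) : Prop :=
  ∀ x : ℕ → X, (∀ n, x n ∈ U) → UBounded U (Set.range x) → WeaklyPCauchy p x →
    ∃ y : Y, Tendsto (fun n => f (x n)) atTop (𝓝 y)


/-- A weakly `p`-summable sequence (for `1 ≤ p < ∞`) is weakly null. -/
lemma wps_weakly_null {p : ℝ≥0∞} (hp : 1 ≤ p) (hp' : p ≠ ⊤) {x : ℕ → X}
    (hx : WeaklyPSummable p x) (f : X →L[ℝ] ℝ) :
    Tendsto (fun n => f (x n)) atTop (𝓝 0) := by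
  rw [WeaklyPSummable, if_neg hp'] at hx
  have hp0 : p ≠ 0 := by
    intro h0; rw [h0] at hp; exact (not_le.2 (zero_lt_one (α := ℝ≥0∞))) hp
  have hpt : 0 < p.toReal := ENNReal.toReal_pos hp0 hp'
  have hs : Summable (fun n => ‖f (x n)‖ ^ p.toReal) := (memℓp_gen_iff hpt).1 (hx f)
  have h0 : Tendsto (fun n => ‖f (x n)‖ ^ p.toReal) atTop (𝓝 0) := hs.tendsto_atTop_zero
  have hcont : ContinuousAt (fun t : ℝ => t ^ p.toReal⁻¹) 0 :=
    Real.continuousAt_rpow_const 0 _ (Or.inr (by positivity))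
  have h1 : Tendsto (fun n => (‖f (x n)‖ ^ p.toReal) ^ p.toReal⁻¹) atTop (𝓝 0) := by
    have := hcont.tendsto.comp h0
    simpa [Function.comp_def, Real.zero_rpow (inv_ne_zero hpt.ne')] using this
  have h2 : Tendsto (fun n => ‖f (x n)‖) atTop (𝓝 0) := by
    refine h1.congr fun n => ?_
    exact Real.rpow_rpow_inv (norm_nonneg _) hpt.ne'
  exact tendsto_zero_iff_norm_tendsto_zero.2 h2

/-- A weakly null sequence is norm bounded (uniform boundedness). -/
lemma bounded_of_weakly_null {x : ℕ → X}
    (hx : ∀ f : X →L[ℝ] ℝ, Tendsto (fun n => f (x n)) atTop (𝓝 0)) :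
    ∃ R : ℝ, 0 ≤ R ∧ ∀ n, ‖x n‖ ≤ R := by
  have key : ∀ f : StrongDual ℝ X, ∃ C, ∀ n,
      ‖(NormedSpace.inclusionInDoubleDual ℝ X (x n)) f‖ ≤ C := by
    intro f
    have h1 : Tendsto (fun n => ‖f (x n)‖) atTop (𝓝 0) := by
      simpa using (hx f).norm
    have h2 : ∀ᶠ n in atTop, ‖f (x n)‖ < 1 :=
      h1.eventually (eventually_lt_nhds zero_lt_one)
    obtain ⟨N, hN⟩ := h2.exists_forall_of_atTop
    refine ⟨(Finset.range (N + 1)).sup' (by simp) (fun k => ‖f (x k)‖) + 1, fun n => ?_⟩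
    rcases le_or_gt n N with hn | hn
    · have : ‖f (x n)‖ ≤ (Finset.range (N + 1)).sup' (by simp) (fun k => ‖f (x k)‖) :=
        Finset.le_sup' (fun k => ‖f (x k)‖) (Finset.mem_range.2 (Nat.lt_succ_of_le hn))
      calc ‖(NormedSpace.inclusionInDoubleDual ℝ X (x n)) f‖ = ‖f (x n)‖ := rfl
        _ ≤ _ := le_trans this (by linarith)
    · have h3 : ‖f (x n)‖ < 1 := hN n hn.le
      have h4 : (0 : ℝ) ≤ (Finset.range (N + 1)).sup' (by simp) (fun k => ‖f (x k)‖) :=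
        le_trans (norm_nonneg _) (Finset.le_sup' (fun k => ‖f (x k)‖) (Finset.mem_range.2 (Nat.succ_pos N)))
      calc ‖(NormedSpace.inclusionInDoubleDual ℝ X (x n)) f‖ = ‖f (x n)‖ := rfl
        _ ≤ _ := by linarith
  obtain ⟨C, hC⟩ := banach_steinhaus key
  refine ⟨max C 0, le_max_right _ _, fun n => ?_⟩
  have hnorm : ‖NormedSpace.inclusionInDoubleDual ℝ X (x n)‖ = ‖x n‖ :=
    (NormedSpace.inclusionInDoubleDualLi ℝ (E := X)).norm_map (x n)
  rw [← hnorm]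
  exact (hC n).trans (le_max_left _ _)

/-- Sequential criterion for compactness of an operator. -/
lemma isCompactOperator_of_subseq [CompleteSpace Y] (T : X →L[ℝ] Y)
    (hT : ∀ x : ℕ → X, IsBounded (Set.range x) →
      ∃ s : ℕ → ℕ, StrictMono s ∧ ∃ y : Y, Tendsto (fun n => T (x (s n))) atTop (𝓝 y)) :
    IsCompactOperator T := by
  have hseq : IsSeqCompact (closure (T '' Metric.closedBall 0 1)) := by
    intro u hu
    have happrox : ∀ n : ℕ, ∃ w : X, w ∈ Metric.closedBall (0 : X) 1 ∧
        dist (u n) (T w) < 1 / (n + 1) := by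
      intro n
      have := Metric.mem_closure_iff.1 (hu n) (1 / (n + 1)) (by positivity)
      obtain ⟨z, hz, hdz⟩ := this
      obtain ⟨w, hw, rfl⟩ := hz
      exact ⟨w, hw, hdz⟩
    choose w hw hdw using happrox
    have hwb : IsBounded (Set.range w) := by
      refine (isBounded_iff_forall_norm_le).2 ⟨1, ?_⟩
      rintro _ ⟨n, rfl⟩
      simpa using mem_closedBall_zero_iff.1 (hw n)
    obtain ⟨s, hs, y, hy⟩ := hT w hwb
    refine ⟨y, ?_, s, hs, ?_⟩
    · exact mem_closure_of_tendsto hy (by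
        filter_upwards with n
        exact Set.mem_image_of_mem T (hw (s n)))
    · have hd : Tendsto (fun n => dist (u (s n)) (T (w (s n)))) atTop (𝓝 0) := by
        have hle : ∀ n, dist (u (s n)) (T (w (s n))) ≤ 1 / (s n + 1) := fun n => (hdw _).le
        have h0 : Tendsto (fun n : ℕ => 1 / ((s n : ℝ) + 1)) atTop (𝓝 0) := by
          apply tendsto_one_div_add_atTop_nhds_zero_nat.comp
          exact hs.tendsto_atTop
        exact squeeze_zero (fun n => dist_nonneg) hle h0
      have := hy
      refine Tendsto.congr_dist (f₁ := fun n => T (w (s n))) this ?_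
      simpa [dist_comm] using hd
  have hcpt : IsCompact (closure (T '' Metric.closedBall 0 1)) := hseq.isCompact
  refine ⟨closure (T '' Metric.closedBall 0 1), hcpt, ?_⟩
  have hsub : Metric.closedBall (0 : X) 1 ⊆ T ⁻¹' closure (T '' Metric.closedBall 0 1) :=
    fun z hz => subset_closure ⟨z, hz, rfl⟩
  exact Filter.mem_of_superset (Metric.closedBall_mem_nhds 0 zero_lt_one) hsub


end Defs
/-- If there is a nonzero Banach space `Y` such that every uniformly
`p`-convergent subset of `W(X,Y)` is weakly equicompact, then `C_p(X,Y) = K(X,Y)`. -/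
theorem stmt13 [NormedAddCommGroup X] [NormedSpace ℝ X] [CompleteSpace X]
    [NormedAddCommGroup Y] [NormedSpace ℝ Y] [CompleteSpace Y] [Nontrivial Y]
    (p : ℝ≥0∞) (hp : 1 ≤ p) (hp' : p ≠ ⊤)
    (h : ∀ M : Set (X →L[ℝ] Y), (∀ T ∈ M, WeaklyCompactOp T) →
      UnifPConvergent p M → WeaklyEquicompact M) :
    {T : X →L[ℝ] Y | PConvergentOp p T} = {T : X →L[ℝ] Y | IsCompactOperator T} := by
  ext T
  simp only [Set.mem_setOf_eq]
  constructor
  · -- p-convergent implies compact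
    intro hT
    obtain ⟨y₀, hy₀⟩ := exists_ne (0 : Y)
    obtain ⟨g, hg1, hgy⟩ := exists_dual_vector ℝ y₀ (norm_ne_zero_iff.2 hy₀)
    set ψ : Y →L[ℝ] ℝ := ‖y₀‖⁻¹ • g with hψdef
    have hψy : ψ y₀ = 1 := by
      have : g y₀ = ‖y₀‖ := by exact_mod_cast hgy
      simp [hψdef, this, inv_mul_cancel₀ (norm_ne_zero_iff.2 hy₀)]
    set Sop : (Y →L[ℝ] ℝ) → (X →L[ℝ] Y) := fun φ => (φ.comp T).smulRight y₀ with hSdef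
    have hSapp : ∀ φ u, Sop φ u = φ (T u) • y₀ := fun φ u => rfl
    set M : Set (X →L[ℝ] Y) := Sop '' Metric.closedBall 0 1 with hMdef
    have hWC : ∀ S ∈ M, WeaklyCompactOp S := by
      rintro _ ⟨φ, hφ, rfl⟩ x hx
      obtain ⟨R, hR⟩ := isBounded_iff_forall_norm_le.1 hx
      have hb : IsBounded (Set.range fun n => φ (T (x n))) := by
        refine isBounded_iff_forall_norm_le.2 ⟨‖φ.comp T‖ * R, ?_⟩
        rintro _ ⟨n, rfl⟩
        calc ‖φ (T (x n))‖ = ‖(φ.comp T) (x n)‖ := rfl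
          _ ≤ ‖φ.comp T‖ * ‖x n‖ := (φ.comp T).le_opNorm _
          _ ≤ ‖φ.comp T‖ * R :=
            mul_le_mul_of_nonneg_left (hR _ (Set.mem_range_self n)) (norm_nonneg _)
      obtain ⟨c, -, s, hs, hc⟩ := tendsto_subseq_of_bounded hb fun n => Set.mem_range_self n
      refine ⟨s, hs, c • y₀, fun φ' => ?_⟩
      have hmul : Tendsto (fun n => φ (T (x (s n))) * φ' y₀) atTop (𝓝 (c * φ' y₀)) :=
        (hc.congr fun n => rfl).mul_const _
      have : ∀ n, φ' (Sop φ (x (s n))) = φ (T (x (s n))) * φ' y₀ := fun n => by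
        rw [hSapp, map_smul, smul_eq_mul]
      rw [show φ' (c • y₀) = c * φ' y₀ by rw [map_smul, smul_eq_mul]]
      exact hmul.congr fun n => (this n).symm
    have hUPC : UnifPConvergent p M := by
      intro x hx ε hε
      have hy₀1 : (0 : ℝ) < ‖y₀‖ + 1 := by positivity
      have hev : ∀ᶠ n in atTop, ‖T (x n)‖ < ε / (‖y₀‖ + 1) :=
        (hT x hx).eventually (eventually_lt_nhds (by positivity))
      obtain ⟨N, hN⟩ := hev.exists_forall_of_atTop
      refine ⟨N, fun n hn S hS => ?_⟩
      obtain ⟨φ, hφ, rfl⟩ := hS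
      have hφ1 : ‖φ‖ ≤ 1 := mem_closedBall_zero_iff.1 hφ
      have h1 : ‖φ (T (x n))‖ ≤ ‖T (x n)‖ := by
        calc ‖φ (T (x n))‖ ≤ ‖φ‖ * ‖T (x n)‖ := φ.le_opNorm _
          _ ≤ 1 * ‖T (x n)‖ := mul_le_mul_of_nonneg_right hφ1 (norm_nonneg _)
          _ = ‖T (x n)‖ := one_mul _
      have h2 : ‖T (x n)‖ < ε / (‖y₀‖ + 1) := hN n hn
      have h3 : (ε / (‖y₀‖ + 1)) * (‖y₀‖ + 1) = ε := div_mul_cancel₀ _ hy₀1.ne'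
      have h4 : ‖Sop φ (x n)‖ = ‖φ (T (x n))‖ * ‖y₀‖ := by
        rw [hSapp, norm_smul]
      rw [h4]
      nlinarith [norm_nonneg (T (x n)), norm_nonneg y₀, norm_nonneg (φ (T (x n)))]
    have hWE := h M hWC hUPC
    apply isCompactOperator_of_subseq T
    intro x hx
    obtain ⟨s, hs, hφ⟩ := hWE x hx
    obtain ⟨c, hc⟩ := hφ ψ
    have hC := hc.uniformCauchySeqOn
    rw [Metric.uniformCauchySeqOn_iff] at hC
    have hcauchy : CauchySeq fun n => T (x (s n)) := by
      rw [Metric.cauchySeq_iff]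
      intro ε hε
      obtain ⟨N, hN⟩ := hC (ε / 2) (half_pos hε)
      refine ⟨N, fun m hm n hn => ?_⟩
      rw [dist_eq_norm]
      have hle : ‖T (x (s m)) - T (x (s n))‖ ≤ ε / 2 := by
        refine NormedSpace.norm_le_dual_bound ℝ _ (half_pos hε).le fun f => ?_
        by_cases hf : f = 0
        · simp only [hf, ContinuousLinearMap.zero_apply, norm_zero, norm_zero, mul_zero]
          positivity
        · set φ : Y →L[ℝ] ℝ := ‖f‖⁻¹ • f with hφdef
          have hfne : ‖f‖ ≠ 0 := norm_ne_zero_iff.2 hf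
          have hφnorm : ‖φ‖ = 1 := by
            rw [hφdef]
            rw [norm_smul_of_nonneg (by positivity) f, inv_mul_cancel₀ hfne]
          have hφmem : φ ∈ Metric.closedBall (0 : Y →L[ℝ] ℝ) 1 := by
            rw [mem_closedBall_zero_iff, hφnorm]
          have hSM : Sop φ ∈ M := Set.mem_image_of_mem _ hφmem
          have hdist := hN m hm n hn (Sop φ) hSM
          have hkey : ∀ u, ψ (Sop φ u) = φ (T u) := fun u => by
            rw [hSapp, map_smul, smul_eq_mul, hψy, mul_one]
          rw [Real.dist_eq, hkey, hkey] at hdist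
          have hsub : φ (T (x (s m))) - φ (T (x (s n))) =
              φ (T (x (s m)) - T (x (s n))) := (map_sub φ _ _).symm
          rw [hsub] at hdist
          have hfv : f (T (x (s m)) - T (x (s n))) =
              ‖f‖ * φ (T (x (s m)) - T (x (s n))) := by
            rw [hφdef]
            simp only [ContinuousLinearMap.smul_apply, smul_eq_mul]
            field_simp
          rw [hfv, norm_mul, Real.norm_of_nonneg (norm_nonneg f), mul_comm]
          have : ‖φ (T (x (s m)) - T (x (s n)))‖ ≤ ε / 2 := by
            rw [Real.norm_eq_abs]; exact hdist.le
          exact mul_le_mul_of_nonneg_right this (norm_nonneg f)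
      linarith
    obtain ⟨y, hy⟩ := cauchySeq_tendsto_of_complete hcauchy
    exact ⟨s, hs, y, hy⟩
  · -- compact implies p-convergent
    intro hT x hx
    have hwn : ∀ f : X →L[ℝ] ℝ, Tendsto (fun n => f (x n)) atTop (𝓝 0) :=
      fun f => wps_weakly_null hp hp' hx f
    obtain ⟨R, hR0, hR⟩ := bounded_of_weakly_null hwn
    have hT' : IsCompactOperator ⇑(T : X →ₗ[ℝ] Y) := hT
    have hK : IsCompact (closure (⇑(T : X →ₗ[ℝ] Y) '' Metric.closedBall 0 R)) :=
      hT'.isCompact_closure_image_closedBall R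
    have hmem : ∀ n, T (x n) ∈ closure (⇑(T : X →ₗ[ℝ] Y) '' Metric.closedBall 0 R) :=
      fun n => subset_closure (Set.mem_image_of_mem _ (mem_closedBall_zero_iff.2 (hR n)))
    refine tendsto_of_subseq_tendsto fun ns hns => ?_
    obtain ⟨a, -, ms, hms, hlim⟩ := hK.tendsto_subseq fun k => hmem (ns k)
    have ha0 : a = 0 := by
      apply NormedSpace.eq_zero_of_forall_dual_eq_zero ℝ
      intro f
      have h1 : Tendsto (fun k => f (T (x (ns (ms k))))) atTop (𝓝 (f a)) :=
        (f.continuous.tendsto a).comp hlim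
      have h2 : Tendsto (fun k => f (T (x (ns (ms k))))) atTop (𝓝 0) :=
        (hwn (f.comp T)).comp (hns.comp hms.tendsto_atTop)
      exact tendsto_nhds_unique h1 h2
    refine ⟨ms, ?_⟩
    have := hlim.norm
    rw [ha0, norm_zero] at this
    exact this.congr fun n => rfl
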